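/- Let (λ, η) be an exact LCS pair on a 2n-manifold M. Define the elasticity E(λ,η) := {c ∈ ℝ : d_{cη}λ := dλ − c η∧λ is nondegenerate}. If λ is nowhere vanishing, then E(λ,η) equals the complement of the image of the function (1 + η(Z))/η(Z) defined on the open set where η(Z) ≠ 0, where Z is the η-Liouville vector field. In general E(λ,η) ⊆ Im((1+η(Z))/η(Z))^c. -/

import Mathlib

open ExteriorAlgebra

set_option maxHeartbeats 2000000
set_option synthInstance.maxHeartbeats 1000000

/-- Interior product (contraction) with a vector `Z`, acting on the exterior algebra of the
dual space (the algebra of pointwise differential forms). -/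
noncomputable def intProd {V : Type*} [AddCommGroup V] [Module ℝ V] (Z : V) :
    ExteriorAlgebra ℝ (Module.Dual ℝ V) →ₗ[ℝ] ExteriorAlgebra ℝ (Module.Dual ℝ V) :=
  CliffordAlgebra.contractLeft (Module.Dual.eval ℝ V Z)

open CliffordAlgebra

namespace ElastAux

variable {W : Type*} [AddCommGroup W] [Module ℝ W]

local notation "P" => LinearMap.range (ι ℝ : W →ₗ[ℝ] ExteriorAlgebra ℝ W)

lemma ι_anticomm (x y : W) : ι ℝ x * ι ℝ y = -(ι ℝ y * ι ℝ x) :=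
  eq_neg_of_add_eq_zero_left (ι_add_mul_swap x y)

lemma commute_ι (w : W) {a : ExteriorAlgebra ℝ W} (ha : a ∈ P ^ 2) :
    Commute (ι ℝ w) a := by
  rw [pow_two] at ha
  refine Submodule.mul_induction_on ha ?_ ?_
  · rintro _ ⟨u, rfl⟩ _ ⟨v, rfl⟩
    show ι ℝ w * (ι ℝ u * ι ℝ v) = ι ℝ u * ι ℝ v * ι ℝ w
    rw [← mul_assoc, ι_anticomm w u, neg_mul, mul_assoc, ι_anticomm w v, mul_neg,
      neg_neg, mul_assoc]
  · intro x y hx hy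
    exact hx.add_right hy

lemma commute_sq {a b : ExteriorAlgebra ℝ W} (ha : a ∈ P ^ 2) (hb : b ∈ P ^ 2) :
    Commute a b := by
  rw [pow_two] at ha
  refine Submodule.mul_induction_on ha ?_ ?_
  · rintro _ ⟨u, rfl⟩ _ ⟨v, rfl⟩
    exact (commute_ι u hb).mul_left (commute_ι v hb)
  · intro x y hx hy
    exact hx.add_left hy

lemma deriv (d : Module.Dual ℝ W) {a : ExteriorAlgebra ℝ W} (ha : a ∈ P ^ 2)
    (x : ExteriorAlgebra ℝ W) :
    contractLeft d (a * x) = contractLeft d a * x + a * contractLeft d x := by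
  rw [pow_two] at ha
  refine Submodule.mul_induction_on ha ?_ ?_
  · rintro _ ⟨u, rfl⟩ _ ⟨v, rfl⟩
    simp only [mul_assoc, contractLeft_ι_mul, contractLeft_ι]
    simp only [mul_sub, sub_mul, smul_mul_assoc, mul_smul_comm, smul_sub,
      Algebra.algebraMap_eq_smul_one, mul_one]
    abel
  · intro x y hx hy
    simp only [add_mul, map_add, hx, hy]
    abel

lemma pow_mem {a : ExteriorAlgebra ℝ W} (ha : a ∈ P ^ 2) (k : ℕ) :
    a ^ k ∈ P ^ (2 * k) := by
  rw [pow_mul]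
  exact Submodule.pow_mem_pow _ ha k

lemma top_vanish [FiniteDimensional ℝ W] {k : ℕ} (hk : Module.finrank ℝ W < k)
    {a : ExteriorAlgebra ℝ W} (ha : a ∈ P ^ k) : a = 0 := by
  have hbot : (⋀[ℝ]^k W) = ⊥ := by
    rw [← ιMulti_span_fixedDegree, Submodule.span_eq_bot]
    rintro _ ⟨v, rfl⟩
    refine AlternatingMap.map_linearDependent _ v fun h => ?_
    have := h.fintype_card_le_finrank
    simp only [Fintype.card_fin] at this
    omega
  simpa using hbot.le ha

lemma deriv_pow (d : Module.Dual ℝ W) {ω : ExteriorAlgebra ℝ W} (hω : ω ∈ P ^ 2)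
    (lam : W) (hl : contractLeft d ω = ι ℝ lam) (k : ℕ) :
    contractLeft d (ω ^ (k + 1)) = (k + 1) • (ι ℝ lam * ω ^ k) := by
  induction k with
  | zero => simp [hl]
  | succ k ih =>
    have hc : ω * ι ℝ lam = ι ℝ lam * ω := (commute_ι lam hω).symm
    rw [pow_succ', deriv d hω, ih, hl, mul_smul_comm, ← mul_assoc, hc, mul_assoc,
      ← pow_succ']
    rw [succ_nsmul' (ι ℝ lam * ω ^ (k + 1)) (k+1)]

lemma binom {ω e : ExteriorAlgebra ℝ W} (hcomm : Commute ω e) (he : e * e = 0) (k : ℕ) :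
    (ω + e) ^ (k + 1) = ω ^ (k + 1) + (k + 1) • (e * ω ^ k) := by
  induction k with
  | zero => simp
  | succ k ih =>
    have h1 : (ω + e) * (e * ω ^ k) = e * ω ^ (k + 1) := by
      rw [add_mul, ← mul_assoc, hcomm.eq, mul_assoc, ← pow_succ', ← mul_assoc, he,
        zero_mul, add_zero]
    rw [pow_succ', ih, mul_add, mul_smul_comm, h1, add_mul, ← pow_succ',
      succ_nsmul' (e * ω ^ (k + 1)) (k+1)]
    abel

lemma key [FiniteDimensional ℝ W] (n : ℕ) (hn : 1 ≤ n) (hdim : Module.finrank ℝ W = 2 * n)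
    (d : Module.Dual ℝ W) (lam η : W) {D : ExteriorAlgebra ℝ W}
    (hD : D ∈ P ^ 2)
    (hZ : contractLeft d (D - ι ℝ η * ι ℝ lam) = ι ℝ lam) (c : ℝ) :
    (D - c • (ι ℝ η * ι ℝ lam)) ^ n
      = (1 + (1 - c) * d η) • (D - ι ℝ η * ι ℝ lam) ^ n := by
  set E : ExteriorAlgebra ℝ W := ι ℝ η * ι ℝ lam with hEdef
  set ω : ExteriorAlgebra ℝ W := D - E with hωdef
  have hE2 : E ∈ P ^ 2 := by
    rw [pow_two]
    exact Submodule.mul_mem_mul (LinearMap.mem_range_self _ η) (LinearMap.mem_range_self _ lam)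
  have hω2 : ω ∈ P ^ 2 := Submodule.sub_mem _ hD hE2
  have hEE : E * E = 0 := by
    rw [hEdef, mul_assoc, ← mul_assoc (ι ℝ lam), ι_anticomm lam η, neg_mul, mul_neg,
      ← mul_assoc, ← mul_assoc, ι_sq_zero, zero_mul, zero_mul, neg_zero]
  have hcomm : Commute ω E := commute_sq hω2 hE2
  obtain ⟨m, rfl⟩ : ∃ m, n = m + 1 := ⟨n - 1, (Nat.succ_pred_eq_of_pos hn).symm⟩
  have hpow := deriv_pow d hω2 lam hZ m
  have htop : ι ℝ η * ω ^ (m + 1) = 0 := by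
    refine top_vanish (k := 2 * (m + 1) + 1) (by rw [hdim]; omega) ?_
    rw [pow_succ']
    exact Submodule.mul_mem_mul (LinearMap.mem_range_self _ η) (pow_mem hω2 (m + 1))
  have hkey : d η • ω ^ (m + 1) = (m + 1) • (E * ω ^ m) := by
    have h0 := congrArg (contractLeft d) htop
    rw [contractLeft_ι_mul, hpow, map_zero, mul_smul_comm, ← mul_assoc, ← hEdef,
      sub_eq_zero] at h0
    exact h0
  have hDc : D - c • E = ω + (1 - c) • E := by
    rw [hωdef, sub_smul, one_smul]; abel
  rw [hDc, binom (hcomm.smul_right _) (by rw [smul_mul_assoc, mul_smul_comm, hEE,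
    smul_zero, smul_zero]) m]
  rw [smul_mul_assoc, smul_comm (m + 1 : ℕ) (1 - c) (E * ω ^ m), ← hkey, smul_smul,
    add_smul, one_smul]

lemma real_aux (t c : ℝ) : 1 + (1 - c) * t ≠ 0 ↔ ¬(t ≠ 0 ∧ (1 + t) / t = c) := by
  constructor
  · rintro h ⟨ht, rfl⟩
    apply h
    field_simp
    ring
  · intro h h0
    have ht : t ≠ 0 := by rintro rfl; simp at h0
    refine h ⟨ht, ?_⟩
    rw [div_eq_iff ht]
    have := h0
    ring_nf at this ⊢
    linarith

end ElastAux

/-- An exact LCS pair on a `2n`-manifold `M`, modeled as a family of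
pointwise data: at each point `x`, `1`-forms `lam x, η x` on the tangent space `V x`,
a `2`-form `D x` (representing `dλ` at `x`) with `(D x − η∧λ)^n ≠ 0`
(nondegeneracy of `d_η λ`), and the `η`-Liouville vector field `Z` with
`ι_{Z x}(D x − η∧λ) = λ`.  The elasticity
`E(λ,η) = {c | dλ − c·η∧λ is everywhere nondegenerate}` satisfies
`E(λ,η) ⊆ Im((1 + η(Z))/η(Z))ᶜ` (image over the set where `η(Z) ≠ 0`), with equality
when `λ` is nowhere vanishing. -/
theorem elasticity_subset_complement_of_image {M : Type*} (n : ℕ) (hn : 1 ≤ n)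
    (V : M → Type*) [∀ x, AddCommGroup (V x)] [∀ x, Module ℝ (V x)]
    [∀ x, FiniteDimensional ℝ (V x)] (hdim : ∀ x, Module.finrank ℝ (V x) = 2 * n)
    (lam η : ∀ x, Module.Dual ℝ (V x))
    (D : ∀ x, ExteriorAlgebra ℝ (Module.Dual ℝ (V x))) (Z : ∀ x, V x)
    (hD : ∀ x, D x ∈ (LinearMap.range
      (ι ℝ : Module.Dual ℝ (V x) →ₗ[ℝ] ExteriorAlgebra ℝ (Module.Dual ℝ (V x)))) ^ 2)
    (hnd : ∀ x, (D x - ι ℝ (η x) * ι ℝ (lam x)) ^ n ≠ 0)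
    (hZ : ∀ x, intProd (Z x) (D x - ι ℝ (η x) * ι ℝ (lam x)) = ι ℝ (lam x)) :
    {c : ℝ | ∀ x, (D x - c • (ι ℝ (η x) * ι ℝ (lam x))) ^ n ≠ 0}
        ⊆ ((fun x => (1 + η x (Z x)) / η x (Z x)) '' {x | η x (Z x) ≠ 0})ᶜ ∧
    ((∀ x, lam x ≠ 0) →
      {c : ℝ | ∀ x, (D x - c • (ι ℝ (η x) * ι ℝ (lam x))) ^ n ≠ 0}
        = ((fun x => (1 + η x (Z x)) / η x (Z x)) '' {x | η x (Z x) ≠ 0})ᶜ) := by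
  have hpt : ∀ (x : M) (c : ℝ),
      (D x - c • (ι ℝ (η x) * ι ℝ (lam x))) ^ n
        = (1 + (1 - c) * η x (Z x)) • (D x - ι ℝ (η x) * ι ℝ (lam x)) ^ n := by
    intro x c
    have hdimW : Module.finrank ℝ (Module.Dual ℝ (V x)) = 2 * n := by
      rw [Subspace.dual_finrank_eq, hdim x]
    exact ElastAux.key n hn hdimW (Module.Dual.eval ℝ (V x) (Z x)) (lam x) (η x)
      (hD x) (hZ x) c
  have hiff : ∀ c : ℝ, (∀ x, (D x - c • (ι ℝ (η x) * ι ℝ (lam x))) ^ n ≠ 0)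
      ↔ ∀ x, 1 + (1 - c) * η x (Z x) ≠ 0 := by
    intro c
    refine forall_congr' fun x => ?_
    rw [hpt x c]
    constructor
    · intro h ha
      exact h (by rw [ha, zero_smul])
    · intro ha h
      refine hnd x ?_
      have h2 : (D x - ι ℝ (η x) * ι ℝ (lam x)) ^ n
          = (1 + (1 - c) * η x (Z x))⁻¹ • ((1 + (1 - c) * η x (Z x))
            • (D x - ι ℝ (η x) * ι ℝ (lam x)) ^ n) := (inv_smul_smul₀ ha _).symm
      rw [h2, h, smul_zero]
  have hEq : {c : ℝ | ∀ x, (D x - c • (ι ℝ (η x) * ι ℝ (lam x))) ^ n ≠ 0}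
      = ((fun x => (1 + η x (Z x)) / η x (Z x)) '' {x | η x (Z x) ≠ 0})ᶜ := by
    ext c
    simp only [Set.mem_setOf_eq, Set.mem_compl_iff, Set.mem_image, not_exists]
    rw [hiff c]
    exact forall_congr' fun x => ElastAux.real_aux (η x (Z x)) c
  exact ⟨subset_of_eq hEq, fun _ => hEq⟩
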